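/- Let λ, μ, μ₀ > 0 satisfy μ·μ₀ < λ·(λ+μ₀). Then there exist reals a, b with 0 < a < 1 and 0 < b < 1 such that λ(1−ab) − μ(b⁻¹−1) > 0 and λ(1−b) − μ₀(a⁻¹−1) > 0. -/

import Mathlib

theorem stmt_2 (lam mu mu0 : ℝ) (hlam : 0 < lam) (hmu : 0 < mu) (hmu0 : 0 < mu0)
    (h : mu * mu0 < lam * (lam + mu0)) :
    ∃ a b : ℝ, 0 < a ∧ a < 1 ∧ 0 < b ∧ b < 1 ∧
      0 < lam * (1 - a * b) - mu * (b⁻¹ - 1) ∧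
      0 < lam * (1 - b) - mu0 * (a⁻¹ - 1) := by
  set β : ℝ := (mu0 + lam * (lam + mu0) / mu) / 2 with hβdef
  have hβpos : 0 < β := by positivity
  have hD : 0 < β - mu0 := by
    have : mu0 < lam * (lam + mu0) / mu := (lt_div_iff₀ hmu).2 (by nlinarith)
    simp only [hβdef]; linarith
  have hG0 : 0 < lam * (lam + β) - mu * β := by
    have hmuβ : mu * β = (mu * mu0 + lam * (lam + mu0)) / 2 := by
      rw [hβdef]; field_simp
    nlinarith [hD, hlam.le, mul_pos hlam hD]
  set ε : ℝ := min (min (1 / (2 * lam)) (1 / (2 * β)))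
      (min ((lam * (lam + β) - mu * β) / (2 * (lam * β * (2 * lam + β))))
        ((β - mu0) / (2 * (lam * β)))) with hεdef
  have hεpos : 0 < ε := by
    apply lt_min <;> apply lt_min <;> positivity
  have hε1 : ε ≤ 1 / (2 * lam) := le_trans (min_le_left _ _) (min_le_left _ _)
  have hε2 : ε ≤ 1 / (2 * β) := le_trans (min_le_left _ _) (min_le_right _ _)
  have hε3 : ε ≤ (lam * (lam + β) - mu * β) / (2 * (lam * β * (2 * lam + β))) :=
    le_trans (min_le_right _ _) (min_le_left _ _)
  have hε4 : ε ≤ (β - mu0) / (2 * (lam * β)) :=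
    le_trans (min_le_right _ _) (min_le_right _ _)
  have hle1 : lam * ε ≤ 1 / 2 := by
    rw [le_div_iff₀ (by positivity)] at hε1; nlinarith
  have hle2 : β * ε ≤ 1 / 2 := by
    rw [le_div_iff₀ (by positivity)] at hε2; nlinarith
  have hle3 : 2 * (lam * β * (2 * lam + β)) * ε ≤ lam * (lam + β) - mu * β := by
    rw [le_div_iff₀ (by positivity)] at hε3; linarith
  have hle4 : 2 * (lam * β) * ε ≤ β - mu0 := by
    rw [le_div_iff₀ (by positivity)] at hε4; linarith
  refine ⟨1 - lam * ε, 1 - β * ε, by linarith, by nlinarith, by linarith, by nlinarith, ?_, ?_⟩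
  · have hb : (0:ℝ) < 1 - β * ε := by linarith
    have heq : lam * (1 - (1 - lam * ε) * (1 - β * ε)) - mu * ((1 - β * ε)⁻¹ - 1)
        = (lam * (1 - (1 - lam * ε) * (1 - β * ε)) * (1 - β * ε) - mu * (β * ε)) / (1 - β * ε) := by
      rw [eq_div_iff hb.ne']; linear_combination (-mu) * mul_inv_cancel₀ hb.ne'
    rw [heq]
    apply div_pos _ hb
    have key : lam * (1 - (1 - lam * ε) * (1 - β * ε)) * (1 - β * ε) - mu * (β * ε)
        = ε * (lam * (lam + β) - mu * β - lam * β * ε * (lam + β) - lam ^ 2 * β * ε * (1 - β * ε)) := by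
      ring
    rw [key]
    apply mul_pos hεpos
    nlinarith [mul_pos hlam hβpos, mul_nonneg (mul_pos hlam hβpos).le hεpos.le,
      mul_nonneg (mul_nonneg (mul_pos hlam hβpos).le hεpos.le) (mul_nonneg hβpos.le hεpos.le)]
  · have ha : (0:ℝ) < 1 - lam * ε := by linarith
    have heq : lam * (1 - (1 - β * ε)) - mu0 * ((1 - lam * ε)⁻¹ - 1)
        = (lam * ε * (β * (1 - lam * ε) - mu0)) / (1 - lam * ε) := by
      field_simp
      ring
    rw [heq]
    apply div_pos _ ha
    apply mul_pos (by positivity)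
    nlinarith
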